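/- arXiv:1610.05372 — 2 statements merged into one kernel-verified Lean document; each statement's English description precedes it below -/
import Mathlib

section
/- Grönwall-type differential inequality yielding the vortex patch convergence rate: suppose y : [0,T] → [0,∞) is differentiable with y(0) = 0 and satisfies y'(t) ≤ 2K y(t) + 2Cν M^{2/(1+α)} y(t)^{α/(1+α)} for all t ∈ [0,T], where K, C, M, ν > 0 and α ∈ (0,1). Then y(t) ≤ (C' ν t)^{1+α} e^{2(1+α)Kt} M² for all t ∈ [0,T], for some constant C' depending only on C and α. -/
open Real Set

/-- Grönwall-type differential inequality yielding the vortex patch convergence rate: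
if y ≥ 0, y(0) = 0 and y' ≤ 2K y + 2Cν M^{2/(1+α)} y^{α/(1+α)} on [0,T], then
y(t) ≤ (C'νt)^{1+α} e^{2(1+α)Kt} M², with C' depending only on C and α. -/
theorem gronwall_vortex_patch_rate (C α : ℝ) (hC : 0 < C) (hα : α ∈ Set.Ioo (0:ℝ) 1) :
    ∃ C' > (0:ℝ), ∀ (K M ν T : ℝ), 0 < K → 0 < M → 0 < ν → 0 < T →
      ∀ y : ℝ → ℝ,
        (∀ t ∈ Set.Icc (0:ℝ) T, 0 ≤ y t) →
        y 0 = 0 →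
        (∀ t ∈ Set.Icc (0:ℝ) T, HasDerivAt y (deriv y t) t ∧
          deriv y t ≤ 2 * K * y t + 2 * C * ν * M ^ (2 / (1 + α)) * (y t) ^ (α / (1 + α))) →
        ∀ t ∈ Set.Icc (0:ℝ) T,
          y t ≤ (C' * ν * t) ^ (1 + α) * Real.exp (2 * (1 + α) * K * t) * M ^ 2 := by
  obtain ⟨hα0, hα1⟩ := hα
  have h1α : (0:ℝ) < 1 + α := by linarith
  refine ⟨4 * C, by linarith, ?_⟩
  intro K M ν T hK hM hν hT y hy0 hy00 hyd t ht
  obtain ⟨ht0, htT⟩ := ht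
  set β : ℝ := α / (1 + α) with hβ
  have hβ0 : 0 < β := div_pos hα0 h1α
  have hβ1 : β < 1 := by rw [hβ, div_lt_one h1α]; linarith
  have hMp : (0:ℝ) < M ^ (2 / (1 + α)) := Real.rpow_pos_of_pos hM _
  set a : ℝ := 2 * C * ν * M ^ (2 / (1 + α)) with ha
  have haPos : 0 < a := by positivity
  set c : ℝ := 2 * a / (1 + α) with hc
  have hcPos : 0 < c := by positivity
  set φ : ℝ → ℝ := fun s => y s * Real.exp (-(2 * K) * s) with hφ
  -- derivative of φ on [0,T]
  have hφderiv : ∀ x ∈ Set.Icc (0:ℝ) T,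
      HasDerivAt φ ((deriv y x - 2 * K * y x) * Real.exp (-(2 * K) * x)) x := by
    intro x hx
    have hE : HasDerivAt (fun s : ℝ => Real.exp (-(2 * K) * s))
        (Real.exp (-(2 * K) * x) * (-(2 * K) * 1)) x :=
      HasDerivAt.exp ((hasDerivAt_id x).const_mul (-(2 * K)))
    have h := (hyd x hx).1.mul hE
    convert h using 1
    · rfl
    · rfl
    · rfl
    · ring
  have hφcont : ContinuousOn φ (Set.Icc (0:ℝ) T) := fun x hx =>
    ((hφderiv x hx).continuousAt).continuousWithinAt
  -- main estimate: φ t ≤ (c*t)^(1+α)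
  have key : φ t ≤ (c * t) ^ (1 + α) := by
    have hεbound : ∀ ε ∈ Set.Ioi (0:ℝ), φ t ≤ (c * t + ε) ^ (1 + α) := by
      intro ε hεmem
      have hε : (0:ℝ) < ε := hεmem
      have hbase : ∀ x : ℝ, 0 ≤ x → 0 < c * x + ε := fun x hx =>
        add_pos_of_nonneg_of_pos (mul_nonneg hcPos.le hx) hε
      have hf' : ∀ x ∈ Set.Ico (0:ℝ) T, HasDerivWithinAt φ
          ((deriv y x - 2 * K * y x) * Real.exp (-(2 * K) * x)) (Set.Ici x) x :=
        fun x hx => (hφderiv x (Set.Ico_subset_Icc_self hx)).hasDerivWithinAt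
      have hinit : φ 0 ≤ (c * 0 + ε) ^ (1 + α) := by
        have hφ0 : φ 0 = 0 := by rw [hφ]; simp [hy00]
        rw [hφ0]
        exact Real.rpow_nonneg (by nlinarith) _
      have hBcont : ContinuousOn (fun x : ℝ => (c * x + ε) ^ (1 + α)) (Set.Icc 0 T) := by
        apply ContinuousOn.rpow_const
        · exact ((continuous_const.mul continuous_id).add continuous_const).continuousOn
        · exact fun x hx => Or.inl (ne_of_gt (hbase x hx.1))
      have hB' : ∀ x ∈ Set.Ico (0:ℝ) T, HasDerivWithinAt
          (fun x : ℝ => (c * x + ε) ^ (1 + α)) (2 * a * (c * x + ε) ^ α) (Set.Ici x) x := by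
        intro x hx
        have hlin : HasDerivAt (fun s : ℝ => c * s + ε) c x := by
          simpa using ((hasDerivAt_id x).const_mul c).add_const ε
        have hx0 := hbase x hx.1
        have h := hlin.rpow_const (p := 1 + α) (Or.inl (ne_of_gt hx0))
        have h2 : HasDerivAt (fun s : ℝ => (c * s + ε) ^ (1 + α))
            (2 * a * (c * x + ε) ^ α) x := by
          convert h using 1
          have he : (1 + α - 1 : ℝ) = α := by ring
          rw [he, hc]
          field_simp
          try ring
        exact h2.hasDerivWithinAt
      have hstrict : ∀ x ∈ Set.Ico (0:ℝ) T, φ x = (c * x + ε) ^ (1 + α) →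
          (deriv y x - 2 * K * y x) * Real.exp (-(2 * K) * x) < 2 * a * (c * x + ε) ^ α := by
        intro x hx hxB
        have hxIcc : x ∈ Set.Icc (0:ℝ) T := Set.Ico_subset_Icc_self hx
        have hx0 : (0:ℝ) ≤ x := hx.1
        have hyx : 0 ≤ y x := hy0 x hxIcc
        have hbx : 0 < c * x + ε := hbase x hx0
        have hexp1 : Real.exp (-(2 * K) * x) ≤ 1 := by
          rw [Real.exp_le_one_iff]
          nlinarith
        have hexpβ : Real.exp (-(2 * K) * x) ≤ (Real.exp (-(2 * K) * x)) ^ β := by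
          have h := Real.rpow_le_rpow_of_exponent_ge (Real.exp_pos _) hexp1 hβ1.le
          simpa [Real.rpow_one] using h
        have h1 : (deriv y x - 2 * K * y x) * Real.exp (-(2 * K) * x)
            ≤ a * (y x) ^ β * Real.exp (-(2 * K) * x) := by
          have hd := (hyd x hxIcc).2
          have h2 : deriv y x - 2 * K * y x ≤ a * (y x) ^ β := by
            linarith
          exact mul_le_mul_of_nonneg_right h2 (Real.exp_pos _).le
        have h2 : a * (y x) ^ β * Real.exp (-(2 * K) * x) ≤ a * (φ x) ^ β := by
          have hmul : (φ x) ^ β = (y x) ^ β * (Real.exp (-(2 * K) * x)) ^ β := by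
            rw [hφ]
            exact Real.mul_rpow hyx (Real.exp_pos _).le
          rw [hmul]
          have hyβ : 0 ≤ (y x) ^ β := Real.rpow_nonneg hyx _
          calc a * (y x) ^ β * Real.exp (-(2 * K) * x)
              ≤ a * (y x) ^ β * (Real.exp (-(2 * K) * x)) ^ β :=
                mul_le_mul_of_nonneg_left hexpβ (by positivity)
            _ = a * ((y x) ^ β * (Real.exp (-(2 * K) * x)) ^ β) := by ring
        have h3 : (φ x) ^ β = (c * x + ε) ^ α := by
          rw [hxB, ← Real.rpow_mul hbx.le]
          congr 1
          rw [hβ]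
          field_simp
        calc (deriv y x - 2 * K * y x) * Real.exp (-(2 * K) * x)
            ≤ a * (φ x) ^ β := le_trans h1 h2
          _ = a * (c * x + ε) ^ α := by rw [h3]
          _ < 2 * a * (c * x + ε) ^ α := by
              have hp : (0:ℝ) < (c * x + ε) ^ α := Real.rpow_pos_of_pos hbx _
              nlinarith
      exact image_le_of_deriv_right_lt_deriv_boundary' hφcont hf' hinit hBcont hB' hstrict
        ⟨ht0, htT⟩
    have htend : Filter.Tendsto (fun ε : ℝ => (c * t + ε) ^ (1 + α))
        (nhdsWithin 0 (Set.Ioi 0)) (nhds ((c * t) ^ (1 + α))) := by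
      have h1 : Filter.Tendsto (fun ε : ℝ => c * t + ε) (nhdsWithin 0 (Set.Ioi 0))
          (nhds (c * t)) := by
        have hcont : Continuous (fun ε : ℝ => c * t + ε) := by continuity
        have h := (hcont.tendsto 0).mono_left (nhdsWithin_le_nhds (s := Set.Ioi (0:ℝ)))
        simpa using h
      exact (Real.continuousAt_rpow_const (c * t) (1 + α) (Or.inr h1α.le)).tendsto.comp h1
    exact ge_of_tendsto htend (eventually_mem_nhdsWithin.mono fun ε h => hεbound ε h)
  -- conclude
  have hyφ : y t = φ t * Real.exp (2 * K * t) := by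
    rw [hφ]
    simp only
    rw [mul_assoc, ← Real.exp_add]
    norm_num
  have h4 : (0:ℝ) ≤ 4 * C * ν * t :=
    mul_nonneg (mul_nonneg (by positivity) hν.le) ht0
  have hd0 : (0:ℝ) ≤ 4 * C * ν * t / (1 + α) := div_nonneg h4 h1α.le
  have hct : c * t = (4 * C * ν * t / (1 + α)) * M ^ (2 / (1 + α)) := by
    rw [hc, ha]; ring
  have hsplit : (c * t) ^ (1 + α) = (4 * C * ν * t / (1 + α)) ^ (1 + α) * M ^ 2 := by
    rw [hct, Real.mul_rpow hd0 hMp.le, ← Real.rpow_mul hM.le]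
    congr 1
    have he : 2 / (1 + α) * (1 + α) = (2:ℝ) := by field_simp
    rw [he, show (2:ℝ) = ((2:ℕ):ℝ) by norm_num, Real.rpow_natCast]
  have hmono : (4 * C * ν * t / (1 + α)) ^ (1 + α) ≤ (4 * C * ν * t) ^ (1 + α) :=
    Real.rpow_le_rpow hd0 (div_le_self h4 (by linarith)) h1α.le
  have hexp2 : Real.exp (2 * K * t) ≤ Real.exp (2 * (1 + α) * K * t) := by
    apply Real.exp_le_exp.2
    nlinarith [mul_nonneg (mul_nonneg hα0.le hK.le) ht0]
  calc y t = φ t * Real.exp (2 * K * t) := hyφ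
    _ ≤ (c * t) ^ (1 + α) * Real.exp (2 * K * t) :=
        mul_le_mul_of_nonneg_right key (Real.exp_pos _).le
    _ = (4 * C * ν * t / (1 + α)) ^ (1 + α) * M ^ 2 * Real.exp (2 * K * t) := by
        rw [hsplit]
    _ ≤ (4 * C * ν * t) ^ (1 + α) * M ^ 2 * Real.exp (2 * (1 + α) * K * t) := by
        exact mul_le_mul (mul_le_mul_of_nonneg_right hmono (sq_nonneg M)) hexp2
          (Real.exp_pos _).le (mul_nonneg (Real.rpow_nonneg h4 _) (sq_nonneg M))
    _ = (4 * C * ν * t) ^ (1 + α) * Real.exp (2 * (1 + α) * K * t) * M ^ 2 := by ring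
end

section
/- L^∞ ∩ BV embeds into the Besov space Ḃ^{1/2}_{2,∞}: there exists C > 0 such that for every function f ∈ L^∞(ℝⁿ) ∩ BV(ℝⁿ), sup_{h≠0} |h|^{−1/2} ‖f(·+h) − f‖_{L²(ℝⁿ)} ≤ C (‖f‖_{L^∞} ‖f‖_{BV})^{1/2}. -/
open Real MeasureTheory
open scoped ENNReal

/-- L^∞ ∩ BV embeds into Ḃ^{1/2}_{2,∞}: there is a universal constant C such that
whenever f is bounded by M and has the BV translation property
‖f(·+h) − f‖_{L¹} ≤ V‖h‖, then ‖f(·+h) − f‖_{L²} ≤ C √(MV) √‖h‖ for all h ≠ 0,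
i.e. sup_{h≠0} ‖h‖^{-1/2} ‖f(·+h) − f‖_{L²} ≤ C (‖f‖_{L^∞} ‖f‖_{BV})^{1/2}. -/
theorem linfty_bv_embeds_besov_half (n : ℕ) :
    ∃ C > (0:ℝ), ∀ (f : EuclideanSpace ℝ (Fin n) → ℝ) (M V : ℝ), 0 ≤ M → 0 ≤ V →
      (∀ x, |f x| ≤ M) →
      (∀ h : EuclideanSpace ℝ (Fin n),
        eLpNorm (fun x => f (x + h) - f x) 1 volume ≤ ENNReal.ofReal (V * ‖h‖)) →
      ∀ h : EuclideanSpace ℝ (Fin n), h ≠ 0 →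
        eLpNorm (fun x => f (x + h) - f x) 2 volume ≤
          ENNReal.ofReal (C * Real.sqrt (M * V) * Real.sqrt ‖h‖) := by
  refine ⟨Real.sqrt 2, Real.sqrt_pos.mpr (by norm_num), ?_⟩
  intro f M V hM hV hbd hbv h hne
  set g : EuclideanSpace ℝ (Fin n) → ℝ := fun x => f (x + h) - f x with hg
  -- pointwise bound ‖g x‖ ≤ 2M
  have hgb : ∀ x, (‖g x‖₊ : ℝ≥0∞) ≤ ENNReal.ofReal (2 * M) := by
    intro x
    rw [← ENNReal.ofReal_coe_nnreal, coe_nnnorm]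
    apply ENNReal.ofReal_le_ofReal
    calc ‖g x‖ = |f (x + h) - f x| := rfl
      _ ≤ |f (x + h)| + |f x| := abs_sub _ _
      _ ≤ M + M := add_le_add (hbd _) (hbd _)
      _ = 2 * M := by ring
  -- key integral estimate
  have key : (∫⁻ x, (‖g x‖₊ : ℝ≥0∞) ^ (2:ℝ) ∂volume) ≤
      ENNReal.ofReal (2 * M * (V * ‖h‖)) := by
    have step1 : (∫⁻ x, (‖g x‖₊ : ℝ≥0∞) ^ (2:ℝ) ∂volume) ≤
        ∫⁻ x, ENNReal.ofReal (2 * M) * (‖g x‖₊ : ℝ≥0∞) ∂volume := by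
      apply lintegral_mono
      intro x
      dsimp only
      have : ((‖g x‖₊ : ℝ≥0∞)) ^ (2:ℝ) = (‖g x‖₊ : ℝ≥0∞) * (‖g x‖₊ : ℝ≥0∞) := by
        rw [show (2:ℝ) = ((2:ℕ):ℝ) by norm_num, ENNReal.rpow_natCast, pow_two]
      rw [this]
      exact mul_le_mul_left (hgb x) _
    have step2 : (∫⁻ x, ENNReal.ofReal (2 * M) * (‖g x‖₊ : ℝ≥0∞) ∂volume) =
        ENNReal.ofReal (2 * M) * ∫⁻ x, (‖g x‖₊ : ℝ≥0∞) ∂volume :=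
      lintegral_const_mul' _ _ ENNReal.ofReal_ne_top
    have step3 : (∫⁻ x, (‖g x‖₊ : ℝ≥0∞) ∂volume) ≤ ENNReal.ofReal (V * ‖h‖) := by
      have := hbv h
      rwa [eLpNorm_one_eq_lintegral_enorm] at this
    calc (∫⁻ x, (‖g x‖₊ : ℝ≥0∞) ^ (2:ℝ) ∂volume)
        ≤ ENNReal.ofReal (2 * M) * ∫⁻ x, (‖g x‖₊ : ℝ≥0∞) ∂volume := step1.trans step2.le
      _ ≤ ENNReal.ofReal (2 * M) * ENNReal.ofReal (V * ‖h‖) :=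
          mul_le_mul_right step3 _
      _ = ENNReal.ofReal (2 * M * (V * ‖h‖)) := by
          rw [← ENNReal.ofReal_mul (by positivity)]
  -- conclude
  rw [eLpNorm_eq_lintegral_rpow_enorm_toReal (by norm_num) (by norm_num)]
  have h2 : ((2:ℝ≥0∞)).toReal = (2:ℝ) := by norm_num
  rw [h2]
  calc (∫⁻ x, (‖g x‖₊ : ℝ≥0∞) ^ (2:ℝ) ∂volume) ^ ((1:ℝ)/2)
      ≤ (ENNReal.ofReal (2 * M * (V * ‖h‖))) ^ ((1:ℝ)/2) :=
        ENNReal.rpow_le_rpow key (by norm_num)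
    _ = ENNReal.ofReal ((2 * M * (V * ‖h‖)) ^ ((1:ℝ)/2)) :=
        ENNReal.ofReal_rpow_of_nonneg (by positivity) (by norm_num)
    _ = ENNReal.ofReal (Real.sqrt 2 * Real.sqrt (M * V) * Real.sqrt ‖h‖) := by
        congr 1
        have heq : 2 * M * (V * ‖h‖) = 2 * (M * V) * ‖h‖ := by ring
        rw [← Real.sqrt_eq_rpow, heq, Real.sqrt_mul (by positivity),
          Real.sqrt_mul (by norm_num : (0:ℝ) ≤ 2)]
end
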